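/- arXiv:1701.07084 — 4 statements merged into one kernel-verified Lean document; each statement's English description precedes it below -/
import Mathlib

section
/- Let h be a function analytic on the open unit disc of ℂ such that the integrals ∫₀^{2π} log(1 + |h(r e^{iθ})|) dθ are uniformly bounded over r ∈ (0,1) (i.e., h belongs to the Nevanlinna class N). Define g on the open unit disc by g(z) = (h(z) − h(0))/z for z ≠ 0 and g(0) = h′(0). Then g is analytic on the open unit disc and the integrals ∫₀^{2π} log(1 + |g(r e^{iθ})|) dθ are uniformly bounded over r ∈ (0,1) (i.e., g belongs to the Nevanlinna class N). -/
/-- **Lemma 1.1 of the paper (Nevanlinna-class part).**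
If `h` is analytic on the open unit disc and the integrals
`∫ θ in 0..2π, log (1 + |h (r e^{iθ})|)` are uniformly bounded for `r ∈ (0,1)`
(i.e. `h` belongs to the Nevanlinna class `N`), then the function
`g z = (h z - h 0) / z` (with `g 0 = h' 0`) is analytic on the open unit disc and
the corresponding integrals for `g` are uniformly bounded as well
(i.e. `g` belongs to the Nevanlinna class `N`). -/
theorem nevanlinna_of_divided_difference
    (h : ℂ → ℂ) (hh : DifferentiableOn ℂ h (Metric.ball (0 : ℂ) 1))
    (M : ℝ)
    (hM : ∀ r : ℝ, r ∈ Set.Ioo (0 : ℝ) 1 →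
      (∫ θ in (0 : ℝ)..(2 * Real.pi),
        Real.log (1 + ‖(h ((r : ℂ) * Complex.exp ((θ : ℂ) * Complex.I)))‖)) ≤ M) :
    DifferentiableOn ℂ
      (fun z : ℂ => if z = 0 then deriv h 0 else (h z - h 0) / z) (Metric.ball (0 : ℂ) 1) ∧
    ∃ M' : ℝ, ∀ r : ℝ, r ∈ Set.Ioo (0 : ℝ) 1 →
      (∫ θ in (0 : ℝ)..(2 * Real.pi),
        Real.log (1 + ‖
          ((fun z : ℂ => if z = 0 then deriv h 0 else (h z - h 0) / z)
            ((r : ℂ) * Complex.exp ((θ : ℂ) * Complex.I)))‖)) ≤ M' := by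
  set g : ℂ → ℂ := fun z : ℂ => if z = 0 then deriv h 0 else (h z - h 0) / z with hg_def
  have hg_eq : g = dslope h 0 := by
    funext z
    by_cases hz : z = 0
    · simp [hg_def, hz]
    · simp [hg_def, hz, dslope_of_ne _ hz, slope_def_field]
  have hmem : Metric.ball (0:ℂ) 1 ∈ nhds (0:ℂ) := Metric.ball_mem_nhds 0 one_pos
  have hgdiff : DifferentiableOn ℂ g (Metric.ball 0 1) := by
    rw [hg_eq]; exact (Complex.differentiableOn_dslope hmem).mpr hh
  refine ⟨hgdiff, ?_⟩
  have hcg : ContinuousOn g (Metric.ball 0 1) := hgdiff.continuousOn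
  have hch : ContinuousOn h (Metric.ball 0 1) := hh.continuousOn
  obtain ⟨C, hC⟩ := (isCompact_closedBall (0:ℂ) (1/2)).exists_bound_of_continuousOn
    (hcg.mono (Metric.closedBall_subset_ball (by norm_num)))
  set K := Real.log 2 + Real.log (1 + ‖h 0‖) with hK
  refine ⟨max (2 * Real.pi * Real.log (1 + C)) (M + 2 * Real.pi * K), ?_⟩
  rintro r ⟨hr0, hr1⟩
  have habs : ∀ θ : ℝ, ‖(r:ℂ) * Complex.exp ((θ:ℂ) * Complex.I)‖ = r := by
    intro θ
    rw [norm_mul, Complex.norm_exp]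
    simp [abs_of_pos hr0]
  have hmemball : ∀ θ : ℝ, ((r:ℂ) * Complex.exp ((θ:ℂ) * Complex.I)) ∈ Metric.ball (0:ℂ) 1 := by
    intro θ
    rw [Metric.mem_ball, dist_zero_right, habs θ]
    exact hr1
  have hcont_point : Continuous fun θ : ℝ => ((r:ℂ) * Complex.exp ((θ:ℂ) * Complex.I)) := by
    fun_prop
  have hg1 : Continuous fun θ : ℝ => g ((r:ℂ) * Complex.exp ((θ:ℂ) * Complex.I)) :=
    hcg.comp_continuous hcont_point hmemball
  have hh1 : Continuous fun θ : ℝ => h ((r:ℂ) * Complex.exp ((θ:ℂ) * Complex.I)) :=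
    hch.comp_continuous hcont_point hmemball
  have hcontg : Continuous fun θ : ℝ =>
      Real.log (1 + ‖g ((r:ℂ) * Complex.exp ((θ:ℂ) * Complex.I))‖) := by
    apply Continuous.log
    · exact continuous_const.add (continuous_norm.comp hg1)
    · intro θ; positivity
  have hconth : Continuous fun θ : ℝ =>
      Real.log (1 + ‖h ((r:ℂ) * Complex.exp ((θ:ℂ) * Complex.I))‖) := by
    apply Continuous.log
    · exact continuous_const.add (continuous_norm.comp hh1)
    · intro θ; positivity
  have hintg : IntervalIntegrable (fun θ : ℝ =>
      Real.log (1 + ‖g ((r:ℂ) * Complex.exp ((θ:ℂ) * Complex.I))‖))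
      MeasureTheory.volume 0 (2 * Real.pi) := hcontg.intervalIntegrable _ _
  have hinth : IntervalIntegrable (fun θ : ℝ =>
      Real.log (1 + ‖h ((r:ℂ) * Complex.exp ((θ:ℂ) * Complex.I))‖))
      MeasureTheory.volume 0 (2 * Real.pi) := hconth.intervalIntegrable _ _
  have hpi : (0:ℝ) ≤ 2 * Real.pi := by positivity
  rcases le_or_gt r (1/2) with hhalf | hhalf
  · refine le_trans ?_ (le_max_left _ _)
    have hCpt : ∀ θ : ℝ,
        Real.log (1 + ‖g ((r:ℂ) * Complex.exp ((θ:ℂ) * Complex.I))‖) ≤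
          Real.log (1 + C) := by
      intro θ
      have hm : ((r:ℂ) * Complex.exp ((θ:ℂ) * Complex.I)) ∈ Metric.closedBall (0:ℂ) (1/2) := by
        rw [Metric.mem_closedBall, dist_zero_right, habs θ]
        exact hhalf
      have := hC _ hm
      have hgle : ‖g ((r:ℂ) * Complex.exp ((θ:ℂ) * Complex.I))‖ ≤ C := this
      gcongr
    calc (∫ θ in (0:ℝ)..(2*Real.pi),
          Real.log (1 + ‖g ((r:ℂ) * Complex.exp ((θ:ℂ) * Complex.I))‖))
        ≤ ∫ _θ in (0:ℝ)..(2*Real.pi), Real.log (1 + C) :=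
          intervalIntegral.integral_mono_on hpi hintg
            (intervalIntegrable_const) (fun θ _ => hCpt θ)
      _ = 2 * Real.pi * Real.log (1 + C) := by
          rw [intervalIntegral.integral_const]; ring_nf
  · refine le_trans ?_ (le_max_right _ _)
    have hpt : ∀ θ : ℝ,
        Real.log (1 + ‖g ((r:ℂ) * Complex.exp ((θ:ℂ) * Complex.I))‖) ≤
          Real.log (1 + ‖h ((r:ℂ) * Complex.exp ((θ:ℂ) * Complex.I))‖) + K := by
      intro θ
      set z := (r:ℂ) * Complex.exp ((θ:ℂ) * Complex.I) with hz_def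
      have hz0 : z ≠ 0 := by
        intro h0
        have := habs θ
        rw [← hz_def, h0] at this
        simp at this
        linarith
      have hgz : ‖g z‖ = ‖h z - h 0‖ / r := by
        rw [hg_def]
        simp only [if_neg hz0, norm_div]
        rw [hz_def, habs θ]
      set A := ‖h z‖ with hA
      set B := ‖h 0‖ with hB
      have hA0 : 0 ≤ A := norm_nonneg _
      have hB0 : 0 ≤ B := norm_nonneg _
      have htri : ‖h z - h 0‖ ≤ A + B := by
        simpa [hA, hB] using norm_sub_le (h z) (h 0)
      have h1 : ‖g z‖ ≤ 2 * (A + B) := by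
        rw [hgz, div_le_iff₀ hr0]
        nlinarith
      have h2 : 1 + ‖g z‖ ≤ 2 * (1 + A) * (1 + B) := by
        have := norm_nonneg (g z)
        nlinarith
      have h3 : Real.log (1 + ‖g z‖) ≤ Real.log (2 * (1 + A) * (1 + B)) := by
        have hpos : (0:ℝ) < 1 + ‖g z‖ := by positivity
        gcongr
      have h4 : Real.log (2 * (1 + A) * (1 + B)) =
          Real.log 2 + Real.log (1 + A) + Real.log (1 + B) := by
        rw [Real.log_mul (by positivity) (by positivity),
          Real.log_mul (by norm_num) (by positivity)]
      rw [h4] at h3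
      rw [hK]
      linarith
    calc (∫ θ in (0:ℝ)..(2*Real.pi),
          Real.log (1 + ‖g ((r:ℂ) * Complex.exp ((θ:ℂ) * Complex.I))‖))
        ≤ ∫ θ in (0:ℝ)..(2*Real.pi),
            (Real.log (1 + ‖h ((r:ℂ) * Complex.exp ((θ:ℂ) * Complex.I))‖) + K) :=
          intervalIntegral.integral_mono_on hpi hintg
            (hinth.add intervalIntegrable_const) (fun θ _ => hpt θ)
      _ = (∫ θ in (0:ℝ)..(2*Real.pi),
            Real.log (1 + ‖h ((r:ℂ) * Complex.exp ((θ:ℂ) * Complex.I))‖))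
          + 2 * Real.pi * K := by
          rw [intervalIntegral.integral_add hinth intervalIntegrable_const,
            intervalIntegral.integral_const, smul_eq_mul]
          ring
      _ ≤ M + 2 * Real.pi * K := by
          have := hM r ⟨hr0, hr1⟩
          linarith
end

section
/- Let h be a function analytic on the open unit disc of ℂ. Suppose there is a measurable function h* : ℝ → ℂ such that for almost every θ ∈ [0, 2π] the radial limit lim_{r→1⁻} h(r e^{iθ}) exists and equals h*(θ), that ∫₀^{2π} log⁺|h*(θ) − h(0)| dθ < ∞, and that lim_{r→1⁻} ∫₀^{2π} log⁺|h(r e^{iθ}) − h(0)| dθ = ∫₀^{2π} log⁺|h*(θ) − h(0)| dθ (i.e., h − h(0) satisfies the Smirnov-class limit condition). Define g on the open unit disc by g(z) = (h(z) − h(0))/z for z ≠ 0 and g(0) = h′(0). Then lim_{r→1⁻} ∫₀^{2π} log⁺|g(r e^{iθ})| dθ = ∫₀^{2π} log⁺|h*(θ) − h(0)| dθ; note that the right-hand side equals the integral of log⁺ of the (a.e.) radial limit of g, since that limit is (h*(θ) − h(0))/e^{iθ}. -/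
open MeasureTheory Filter

private lemma logpos_eq_aux {x : ℝ} (hx : 0 ≤ x) :
    max 0 (Real.log x) = Real.log (max 1 x) := by
  rcases le_or_gt 1 x with h1 | h1
  · rw [max_eq_right h1, max_eq_right (Real.log_nonneg h1)]
  · rw [max_eq_left h1.le, Real.log_one, max_eq_left (Real.log_nonpos hx h1.le)]

private lemma logpos_le_logpos_div_aux {a r : ℝ} (ha : 0 ≤ a) (hr0 : 0 < r) (hr1 : r < 1) :
    max 0 (Real.log a) ≤ max 0 (Real.log (a / r)) := by
  rcases eq_or_lt_of_le ha with h | h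
  · simp [← h]
  · exact max_le_max le_rfl (Real.log_le_log h (by
      rw [le_div_iff₀ hr0]; nlinarith))

private lemma logpos_div_le_aux {a r : ℝ} (ha : 0 ≤ a) (hr0 : 0 < r) (hr1 : r < 1) :
    max 0 (Real.log (a / r)) ≤ max 0 (Real.log a) + (-Real.log r) := by
  have hlr : 0 ≤ -Real.log r := by
    have := Real.log_nonpos hr0.le hr1.le; linarith
  rcases eq_or_lt_of_le ha with h | h
  · simp [← h, hlr]
  · apply max_le
    · positivity
    · rw [Real.log_div h.ne' hr0.ne']
      have : Real.log a ≤ max 0 (Real.log a) := le_max_right _ _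
      linarith

private lemma logpos_intervalIntegrable_aux (f : ℝ → ℝ)
    (hf : ContinuousOn f (Set.uIcc 0 (2 * Real.pi))) (hnn : ∀ θ, 0 ≤ f θ) :
    IntervalIntegrable (fun θ : ℝ => max 0 (Real.log (f θ))) volume 0 (2 * Real.pi) := by
  have : ContinuousOn (fun θ : ℝ => max 0 (Real.log (f θ))) (Set.uIcc 0 (2 * Real.pi)) := by
    have heq : ∀ θ : ℝ, max 0 (Real.log (f θ)) = Real.log (max 1 (f θ)) :=
      fun θ => logpos_eq_aux (hnn θ)
    simp only [heq]
    exact ContinuousOn.log (ContinuousOn.sup continuousOn_const hf)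
      (fun θ _ => by have := hnn θ; positivity)
  exact this.intervalIntegrable

/-- **Lemma 1.1 of the paper (Smirnov-class limit identity).**
Let `h` be analytic on the open unit disc, with a measurable boundary-value function `h*`
attained as an a.e. radial limit on `[0, 2π]`.  Assume `∫₀^{2π} log⁺ |h*(θ) - h 0| dθ < ∞`
(formalized as integrability of the nonnegative integrand) and that `h - h 0` satisfies the
Smirnov-class limit condition
`lim_{r→1⁻} ∫₀^{2π} log⁺ |h(r e^{iθ}) - h 0| dθ = ∫₀^{2π} log⁺ |h*(θ) - h 0| dθ`.
Then, for `g z = (h z - h 0)/z` (with `g 0 = h' 0`), one has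
`lim_{r→1⁻} ∫₀^{2π} log⁺ |g(r e^{iθ})| dθ = ∫₀^{2π} log⁺ |h*(θ) - h 0| dθ`. -/
theorem smirnov_limit_of_divided_difference
    (h : ℂ → ℂ) (hstar : ℝ → ℂ)
    (hh : DifferentiableOn ℂ h (Metric.ball (0 : ℂ) 1))
    (hmeas : Measurable hstar)
    (hradial : ∀ᵐ (θ : ℝ) ∂(volume.restrict (Set.Ioc (0 : ℝ) (2 * Real.pi))),
      Tendsto (fun r : ℝ => h ((r : ℂ) * Complex.exp ((θ : ℂ) * Complex.I)))
        (nhdsWithin 1 (Set.Iio 1)) (nhds (hstar θ)))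
    (hint : IntegrableOn
      (fun θ : ℝ => max 0 (Real.log (norm (hstar θ - h 0))))
      (Set.Ioc (0 : ℝ) (2 * Real.pi)))
    (hlim : Tendsto
      (fun r : ℝ => ∫ θ in (0 : ℝ)..(2 * Real.pi),
        max 0 (Real.log (norm
          (h ((r : ℂ) * Complex.exp ((θ : ℂ) * Complex.I)) - h 0))))
      (nhdsWithin 1 (Set.Iio 1))
      (nhds (∫ θ in (0 : ℝ)..(2 * Real.pi),
        max 0 (Real.log (norm (hstar θ - h 0)))))) :
    Tendsto
      (fun r : ℝ => ∫ θ in (0 : ℝ)..(2 * Real.pi),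
        max 0 (Real.log (norm
          ((fun z : ℂ => if z = 0 then deriv h 0 else (h z - h 0) / z)
            ((r : ℂ) * Complex.exp ((θ : ℂ) * Complex.I))))))
      (nhdsWithin 1 (Set.Iio 1))
      (nhds (∫ θ in (0 : ℝ)..(2 * Real.pi),
        max 0 (Real.log (norm (hstar θ - h 0))))) := by
  have hπ : (0 : ℝ) < 2 * Real.pi := by positivity
  set L : ℝ := ∫ θ in (0 : ℝ)..(2 * Real.pi),
    max 0 (Real.log (norm (hstar θ - h 0))) with hL
  set c : ℝ → ℝ → ℝ := fun r θ =>
    norm (h ((r : ℂ) * Complex.exp ((θ : ℂ) * Complex.I)) - h 0) with hc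
  set F : ℝ → ℝ := fun r => ∫ θ in (0 : ℝ)..(2 * Real.pi),
    max 0 (Real.log (c r θ)) with hF
  -- continuity of c r
  have hcont : ∀ r ∈ Set.Ioo (0 : ℝ) 1,
      ContinuousOn (c r) (Set.uIcc 0 (2 * Real.pi)) := by
    intro r hr
    apply continuous_norm.comp_continuousOn
    apply ContinuousOn.sub _ continuousOn_const
    apply hh.continuousOn.comp
    · exact (continuous_const.mul (Complex.continuous_exp.comp (by continuity))).continuousOn
    · intro θ _
      simp only [Metric.mem_ball, dist_zero_right]
      simp [Complex.norm_exp, abs_of_pos hr.1, hr.2]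
  have hFint : ∀ r ∈ Set.Ioo (0 : ℝ) 1,
      IntervalIntegrable (fun θ => max 0 (Real.log (c r θ))) volume 0 (2 * Real.pi) :=
    fun r hr => logpos_intervalIntegrable_aux _ (hcont r hr)
      (fun θ => norm_nonneg _)
  have hGint : ∀ r ∈ Set.Ioo (0 : ℝ) 1,
      IntervalIntegrable (fun θ => max 0 (Real.log (c r θ / r))) volume 0 (2 * Real.pi) :=
    fun r hr => logpos_intervalIntegrable_aux _ ((hcont r hr).div_const r)
      (fun θ => div_nonneg (norm_nonneg _) hr.1.le)
  -- the g-integrand equals max 0 (log (c r θ / r)) for r ∈ (0,1)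
  have hGeq : ∀ r ∈ Set.Ioo (0 : ℝ) 1, ∀ θ : ℝ,
      max 0 (Real.log (norm
        ((fun z : ℂ => if z = 0 then deriv h 0 else (h z - h 0) / z)
          ((r : ℂ) * Complex.exp ((θ : ℂ) * Complex.I)))))
      = max 0 (Real.log (c r θ / r)) := by
    intro r hr θ
    have hz : ((r : ℂ) * Complex.exp ((θ : ℂ) * Complex.I)) ≠ 0 := by
      apply mul_ne_zero
      · exact_mod_cast hr.1.ne'
      · exact Complex.exp_ne_zero _
    simp only [if_neg hz, map_div₀, norm_div, hc]
    congr 2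
    simp [Complex.norm_exp, abs_of_pos hr.1]
  -- eventually r ∈ Ioo 0 1
  have hev : ∀ᶠ r in nhdsWithin (1 : ℝ) (Set.Iio 1), r ∈ Set.Ioo (0 : ℝ) 1 :=
    Ioo_mem_nhdsLT_of_mem (by constructor <;> norm_num)
  -- upper bound tendsto
  have hlog0 : Tendsto (fun r : ℝ => 2 * Real.pi * (-Real.log r))
      (nhdsWithin (1 : ℝ) (Set.Iio 1)) (nhds 0) := by
    have h1 : Tendsto Real.log (nhds (1 : ℝ)) (nhds (Real.log 1)) :=
      (Real.continuousAt_log one_ne_zero).tendsto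
    have h2 : Tendsto (fun r : ℝ => 2 * Real.pi * (-Real.log r)) (nhds (1 : ℝ))
        (nhds (2 * Real.pi * (-Real.log 1))) := (h1.neg).const_mul _
    simpa using h2.mono_left nhdsWithin_le_nhds
  have hupper : Tendsto (fun r : ℝ => F r + 2 * Real.pi * (-Real.log r))
      (nhdsWithin (1 : ℝ) (Set.Iio 1)) (nhds L) := by
    have := hlim.add hlog0
    simpa using this
  -- squeeze
  apply tendsto_of_tendsto_of_tendsto_of_le_of_le' hlim hupper
  · filter_upwards [hev] with r hr
    calc F r ≤ ∫ θ in (0 : ℝ)..(2 * Real.pi), max 0 (Real.log (c r θ / r)) := by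
          apply intervalIntegral.integral_mono_on hπ.le (hFint r hr) (hGint r hr)
          intro θ _
          exact logpos_le_logpos_div_aux (norm_nonneg _) hr.1 hr.2
      _ = _ := by
          rw [intervalIntegral.integral_congr (g := fun θ => max 0 (Real.log (c r θ / r)))
            (fun θ _ => (hGeq r hr θ))]
  · filter_upwards [hev] with r hr
    calc (∫ θ in (0 : ℝ)..(2 * Real.pi), max 0 (Real.log (norm
          ((fun z : ℂ => if z = 0 then deriv h 0 else (h z - h 0) / z)
            ((r : ℂ) * Complex.exp ((θ : ℂ) * Complex.I))))))
        = ∫ θ in (0 : ℝ)..(2 * Real.pi), max 0 (Real.log (c r θ / r)) :=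
          intervalIntegral.integral_congr (fun θ _ => hGeq r hr θ)
      _ ≤ ∫ θ in (0 : ℝ)..(2 * Real.pi), (max 0 (Real.log (c r θ)) + (-Real.log r)) := by
          apply intervalIntegral.integral_mono_on hπ.le (hGint r hr)
            ((hFint r hr).add intervalIntegrable_const)
          intro θ _
          exact logpos_div_le_aux (norm_nonneg _) hr.1 hr.2
      _ = F r + 2 * Real.pi * (-Real.log r) := by
          rw [intervalIntegral.integral_add (hFint r hr) intervalIntegrable_const,
            intervalIntegral.integral_const]
          simp [hF]
end

section
/- Let X be a Banach space (over ℝ or ℂ), Ω : X → X a homogeneous map (Ω(λx) = λΩ(x) for all scalars λ and x ∈ X), W a linear subspace of X, and Λ : W → X a linear map such that C := sup_{w ∈ W, ‖w‖ ≤ 1} ‖Ω(w) − Λ(w)‖ is finite. Then for every n ≥ 1 and all vectors w₁, …, wₙ in the closed unit ball of W, 𝔼‖Ω(Σ_{i=1}^n ε_i w_i) − Σ_{i=1}^n ε_i Ω(w_i)‖ ≤ 2C · β_n(X). -/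
/-- The Rademacher average `𝔼 ‖∑ εᵢ xᵢ‖`: the average over all `2ⁿ` choices of signs
`εᵢ = ±1` of the norm of `∑ εᵢ xᵢ`. -/
noncomputable def rademacherAvg {X : Type*} [NormedAddCommGroup X]
    (n : ℕ) (x : Fin n → X) : ℝ :=
  ((2 : ℝ) ^ n)⁻¹ * ∑ ε : Fin n → Bool, ‖∑ i, (if ε i then x i else -x i)‖

/-- `β_n(X)`: the supremum of `𝔼 ‖∑_{i=1}^n εᵢ xᵢ‖` over all `x₁, …, xₙ` in the closed
unit ball of `X`. -/
noncomputable def betaN (X : Type*) [NormedAddCommGroup X] (n : ℕ) : ℝ :=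
  sSup {r : ℝ | ∃ x : Fin n → X, (∀ i, ‖x i‖ ≤ 1) ∧ r = rademacherAvg n x}

lemma radAvg_le_n {X : Type*} [NormedAddCommGroup X] {n : ℕ}
    {x : Fin n → X} (h : ∀ i, ‖x i‖ ≤ 1) : rademacherAvg n x ≤ n := by
  unfold rademacherAvg
  have h1 : ∀ ε : Fin n → Bool, ‖∑ i, (if ε i then x i else -x i)‖ ≤ (n : ℝ) := by
    intro ε
    calc ‖∑ i, (if ε i then x i else -x i)‖ ≤ ∑ i, ‖(if ε i then x i else -x i)‖ :=
          norm_sum_le _ _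
      _ ≤ ∑ _i : Fin n, (1:ℝ) := Finset.sum_le_sum (fun i _ => by split <;> simpa using h i)
      _ = n := by simp
  calc ((2:ℝ)^n)⁻¹ * ∑ ε : Fin n → Bool, ‖∑ i, (if ε i then x i else -x i)‖
      ≤ ((2:ℝ)^n)⁻¹ * ∑ _ε : Fin n → Bool, (n:ℝ) := by
        gcongr with ε _
        exact h1 ε
    _ = n := by
        simp [Finset.card_univ]

lemma radAvg_le_betaN {X : Type*} [NormedAddCommGroup X] {n : ℕ}
    {x : Fin n → X} (h : ∀ i, ‖x i‖ ≤ 1) : rademacherAvg n x ≤ betaN X n := by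
  apply le_csSup
  · refine ⟨n, ?_⟩
    rintro r ⟨y, hy, rfl⟩
    exact radAvg_le_n hy
  · exact ⟨x, h, rfl⟩

lemma radAvg_smul {𝕜 X : Type*} [RCLike 𝕜] [NormedAddCommGroup X] [NormedSpace 𝕜 X]
    (n : ℕ) (c : 𝕜) (x : Fin n → X) :
    rademacherAvg n (fun i => c • x i) = ‖c‖ * rademacherAvg n x := by
  unfold rademacherAvg
  have h : ∀ ε : Fin n → Bool,
      ‖∑ i, (if ε i then c • x i else -(c • x i))‖ =
        ‖c‖ * ‖∑ i, (if ε i then x i else -x i)‖ := by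
    intro ε
    have hs : (∑ i, (if ε i then c • x i else -(c • x i))) =
        c • ∑ i, (if ε i then x i else -x i) := by
      rw [Finset.smul_sum]
      exact Finset.sum_congr rfl fun i _ => by split <;> simp
    rw [hs, norm_smul]
  rw [Finset.sum_congr rfl fun ε _ => h ε, ← Finset.mul_sum]
  ring

lemma radAvg_le_mul_betaN {𝕜 X : Type*} [RCLike 𝕜] [NormedAddCommGroup X] [NormedSpace 𝕜 X]
    {n : ℕ} {C : ℝ} (hC : 0 ≤ C) {x : Fin n → X} (h : ∀ i, ‖x i‖ ≤ C) :
    rademacherAvg n x ≤ C * betaN X n := by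
  rcases hC.eq_or_lt with rfl | hC'
  · have hx : x = 0 := funext fun i => norm_le_zero_iff.mp (h i)
    simp [hx, rademacherAvg]
  · set y : Fin n → X := fun i => ((C⁻¹ : ℝ) : 𝕜) • x i with hy
    have hy1 : ∀ i, ‖y i‖ ≤ 1 := by
      intro i
      rw [hy]
      simp only [norm_smul, RCLike.norm_ofReal, abs_of_nonneg (inv_nonneg.mpr hC)]
      rw [inv_mul_le_iff₀ hC', mul_one]
      exact h i
    have hxy : x = fun i => ((C : ℝ) : 𝕜) • y i := by
      funext i
      rw [hy]
      simp only [smul_smul, ← RCLike.ofReal_mul, mul_inv_cancel₀ hC'.ne']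
      simp
    calc rademacherAvg n x = ‖((C:ℝ):𝕜)‖ * rademacherAvg n y := by
          rw [hxy]; exact radAvg_smul n _ y
      _ = C * rademacherAvg n y := by
          simp [RCLike.norm_ofReal, abs_of_nonneg hC]
      _ ≤ C * betaN X n := by
          gcongr
          exact radAvg_le_betaN hy1

/-- **Lemma 2.8 of the paper (with the constant `K₁ = 2C` explicit).**
If `Ω : X → X` is homogeneous and trivial on a subspace `W`, witnessed by a linear map
`Λ : W → X` with `‖Ω w - Λ w‖ ≤ C` on the unit ball of `W`, then for any
`w₁, …, wₙ` in the closed unit ball of `W`,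
`𝔼 ‖Ω (∑ εᵢ wᵢ) - ∑ εᵢ Ω wᵢ‖ ≤ 2 C β_n(X)`. -/
theorem avg_quasilinear_defect_le {𝕜 X : Type*} [RCLike 𝕜]
    [NormedAddCommGroup X] [NormedSpace 𝕜 X] [CompleteSpace X]
    (Ω : X → X) (hΩ : ∀ (c : 𝕜) (x : X), Ω (c • x) = c • Ω x)
    (W : Submodule 𝕜 X) (Λ : W →ₗ[𝕜] X) (C : ℝ)
    (hC : ∀ w : W, ‖(w : X)‖ ≤ 1 → ‖Ω (w : X) - Λ w‖ ≤ C)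
    (n : ℕ) (hn : 1 ≤ n) (w : Fin n → W) (hw : ∀ i, ‖(w i : X)‖ ≤ 1) :
    ((2 : ℝ) ^ n)⁻¹ * ∑ ε : Fin n → Bool,
        ‖Ω (∑ i, (if ε i then (w i : X) else -(w i : X))) -
          ∑ i, (if ε i then Ω (w i : X) else -Ω (w i : X))‖
      ≤ 2 * C * betaN X n := by
  have hΩ0 : Ω 0 = 0 := by simpa using hΩ 0 0
  have hC0 : 0 ≤ C := by
    have := hC 0 (by simp)
    simpa [hΩ0] using this
  -- scaled bound
  have hC' : ∀ v : W, ‖Ω (v : X) - Λ v‖ ≤ C * ‖(v : X)‖ := by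
    intro v
    rcases eq_or_ne v 0 with rfl | hv
    · simp [hΩ0]
    · have hnv : (0:ℝ) < ‖(v : X)‖ := by
        rw [norm_pos_iff]
        exact fun h => hv (Subtype.ext h)
      obtain ⟨r, hr_pos, hr⟩ : ∃ r : ℝ, 0 < r ∧ ‖(v : X)‖ = r := ⟨‖(v : X)‖, hnv, rfl⟩
      set u : W := ((r⁻¹ : ℝ) : 𝕜) • v with hu
      have hvu : v = ((r : ℝ) : 𝕜) • u := by
        rw [hu, smul_smul, ← RCLike.ofReal_mul, mul_inv_cancel₀ hr_pos.ne',
          RCLike.ofReal_one, one_smul]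
      have hucoe : (u : X) = ((r⁻¹ : ℝ) : 𝕜) • (v : X) := rfl
      have hunorm : ‖(u : X)‖ ≤ 1 := by
        rw [hucoe, norm_smul, RCLike.norm_ofReal, abs_of_nonneg (inv_nonneg.mpr hr_pos.le),
          hr, inv_mul_cancel₀ hr_pos.ne']
      have hbound := hC u hunorm
      have heq : Ω (v : X) - Λ v = ((r : ℝ) : 𝕜) • (Ω (u : X) - Λ u) := by
        rw [smul_sub]
        congr 1
        · have hcv : (v : X) = ((r : ℝ) : 𝕜) • (u : X) := by rw [hvu]; simp
          rw [hcv, hΩ]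
        · rw [hvu, map_smul]
      rw [hr, heq, norm_smul, RCLike.norm_ofReal, abs_of_nonneg hr_pos.le, mul_comm C r]
      gcongr
  set d : Fin n → X := fun i => Λ (w i) - Ω (w i : X) with hd_def
  have hd : ∀ i, ‖d i‖ ≤ C := fun i => by
    rw [hd_def]
    simpa [norm_sub_rev] using hC (w i) (hw i)
  -- pointwise estimate
  have key : ∀ ε : Fin n → Bool,
      ‖Ω (∑ i, (if ε i then (w i : X) else -(w i : X))) -
        ∑ i, (if ε i then Ω (w i : X) else -Ω (w i : X))‖
      ≤ C * ‖∑ i, (if ε i then (w i : X) else -(w i : X))‖ +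
        ‖∑ i, (if ε i then d i else -d i)‖ := by
    intro ε
    set Sw : W := ∑ i, (if ε i then w i else -w i) with hSw
    have hcoe : (Sw : X) = ∑ i, (if ε i then (w i : X) else -(w i : X)) := by
      rw [hSw]
      push_cast
      exact Finset.sum_congr rfl fun i _ => by split <;> simp
    have hdiff : Λ Sw - ∑ i, (if ε i then Ω (w i : X) else -Ω (w i : X)) =
        ∑ i, (if ε i then d i else -d i) := by
      rw [hSw, map_sum, ← Finset.sum_sub_distrib]
      refine Finset.sum_congr rfl fun i _ => ?_
      by_cases h : ε i <;> simp [h, hd_def] <;> abel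
    have h1 := hC' Sw
    calc ‖Ω (∑ i, (if ε i then (w i : X) else -(w i : X))) -
          ∑ i, (if ε i then Ω (w i : X) else -Ω (w i : X))‖
        = ‖(Ω (Sw : X) - Λ Sw) + (Λ Sw - ∑ i, (if ε i then Ω (w i : X) else -Ω (w i : X)))‖ := by
          rw [hcoe]
          congr 1
          abel
      _ ≤ ‖Ω (Sw : X) - Λ Sw‖ +
          ‖Λ Sw - ∑ i, (if ε i then Ω (w i : X) else -Ω (w i : X))‖ := norm_add_le _ _
      _ ≤ C * ‖(Sw : X)‖ + ‖∑ i, (if ε i then d i else -d i)‖ := by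
          rw [hdiff]; exact add_le_add h1 le_rfl
      _ = C * ‖∑ i, (if ε i then (w i : X) else -(w i : X))‖ +
          ‖∑ i, (if ε i then d i else -d i)‖ := by rw [hcoe]
  calc ((2 : ℝ) ^ n)⁻¹ * ∑ ε : Fin n → Bool,
        ‖Ω (∑ i, (if ε i then (w i : X) else -(w i : X))) -
          ∑ i, (if ε i then Ω (w i : X) else -Ω (w i : X))‖
      ≤ ((2 : ℝ) ^ n)⁻¹ * ∑ ε : Fin n → Bool,
          (C * ‖∑ i, (if ε i then (w i : X) else -(w i : X))‖ +
            ‖∑ i, (if ε i then d i else -d i)‖) := by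
        gcongr with ε _
        exact key ε
    _ = C * rademacherAvg n (fun i => (w i : X)) + rademacherAvg n d := by
        rw [Finset.sum_add_distrib, mul_add, ← Finset.mul_sum]
        unfold rademacherAvg
        ring
    _ ≤ C * betaN X n + C * betaN X n := by
        refine add_le_add ?_ ?_
        · exact mul_le_mul_of_nonneg_left (radAvg_le_betaN hw) hC0
        · exact radAvg_le_mul_betaN (𝕜 := 𝕜) hC0 hd
    _ = 2 * C * betaN X n := by ring
end

section
/- Let 2 < p < ∞ and let Ω_p : ℓ_p → ℂ^ℕ be the Kalton–Peck map defined by Ω_p(x)_k = x_k · log(|x_k|/‖x‖_p) for x ≠ 0 (with the convention that terms with x_k = 0 are 0) and Ω_p(0) = 0. Then Ω_p is nontrivial: there is no linear map Λ : ℓ_p → ℂ^ℕ and constant C ≥ 0 such that Ω_p(x) − Λ(x) ∈ ℓ_p and ‖Ω_p(x) − Λ(x)‖_p ≤ C‖x‖_p for all x ∈ ℓ_p. -/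
open scoped ENNReal

section Aux

lemma aux_rpow_superadd {u v r : ℝ} (hu : 0 ≤ u) (hv : 0 ≤ v) (hr : 1 ≤ r) :
    u ^ r + v ^ r ≤ (u + v) ^ r := by
  have h := NNReal.add_rpow_le_rpow_add u.toNNReal v.toNNReal hr
  have := NNReal.coe_le_coe.2 h
  simpa [NNReal.coe_rpow, Real.coe_toNNReal _ hu, Real.coe_toNNReal _ hv,
    Real.toNNReal_add hu hv] using this

lemma aux_rpow_conv2 {u v r : ℝ} (hu : 0 ≤ u) (hv : 0 ≤ v) (hr : 1 ≤ r) :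
    ((u + v) / 2) ^ r ≤ (u ^ r + v ^ r) / 2 := by
  have h := Real.rpow_arith_mean_le_arith_mean_rpow (Finset.univ : Finset (Fin 2))
    ![1/2, 1/2] ![u, v] (by intro i _; fin_cases i <;> norm_num)
    (by simp [Fin.sum_univ_succ]; norm_num) (by intro i _; fin_cases i <;> simpa) hr
  simp only [Fin.sum_univ_succ, Fin.sum_univ_zero, Matrix.cons_val_zero, Matrix.cons_val_one,
    Matrix.head_cons, Fin.succ_zero_eq_one, add_zero] at h
  calc ((u + v) / 2) ^ r = (1/2 * u + 1/2 * v) ^ r := by ring_nf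
    _ ≤ 1/2 * u ^ r + 1/2 * v ^ r := h
    _ = (u ^ r + v ^ r) / 2 := by ring

lemma aux_clarkson {q : ℝ} (hq : 2 ≤ q) (a c : ℂ) :
    2 * (‖a‖ ^ q + ‖c‖ ^ q) ≤ ‖a + c‖ ^ q + ‖a - c‖ ^ q := by
  set r := q / 2 with hrdef
  have hr : 1 ≤ r := by rw [hrdef]; linarith
  have hnorm : ∀ z : ℂ, ‖z‖ ^ q = (‖z‖ ^ (2:ℝ)) ^ r := by
    intro z
    have h2r : ((2:ℕ):ℝ) * r = q := by push_cast; rw [hrdef]; ring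
    calc ‖z‖ ^ q = ‖z‖ ^ (((2:ℕ):ℝ) * r) := by rw [h2r]
      _ = (‖z‖ ^ (2:ℕ)) ^ r := Real.rpow_natCast_mul (norm_nonneg z) 2 r
      _ = (‖z‖ ^ (2:ℝ)) ^ r := by rw [Real.rpow_two]
  have hpar : ‖a + c‖ ^ (2:ℝ) + ‖a - c‖ ^ (2:ℝ) = 2 * (‖a‖ ^ (2:ℝ) + ‖c‖ ^ (2:ℝ)) := by
    simp only [Real.rpow_two, ← Complex.normSq_eq_norm_sq]
    simp only [Complex.normSq_apply, Complex.add_re, Complex.add_im, Complex.sub_re,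
      Complex.sub_im]
    ring
  rw [hnorm a, hnorm c, hnorm (a+c), hnorm (a-c)]
  set A := ‖a + c‖ ^ (2:ℝ)
  set B := ‖a - c‖ ^ (2:ℝ)
  set U := ‖a‖ ^ (2:ℝ)
  set V := ‖c‖ ^ (2:ℝ)
  have hA : 0 ≤ A := Real.rpow_nonneg (norm_nonneg _) _
  have hB : 0 ≤ B := Real.rpow_nonneg (norm_nonneg _) _
  have hU : 0 ≤ U := Real.rpow_nonneg (norm_nonneg _) _
  have hV : 0 ≤ V := Real.rpow_nonneg (norm_nonneg _) _
  have h1 : U ^ r + V ^ r ≤ (U + V) ^ r := aux_rpow_superadd hU hV hr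
  have h2 : ((A + B) / 2) ^ r ≤ (A ^ r + B ^ r) / 2 := aux_rpow_conv2 hA hB hr
  have h3 : (A + B) / 2 = U + V := by rw [hpar]; ring
  rw [h3] at h2
  linarith

/-- Signs indexed by subsets: `+1` on `s`, `-1` off `s`. -/
noncomputable def kpSgn (s : Finset ℕ) (k : ℕ) : ℝ := if k ∈ s then 1 else -1

lemma kpSgn_norm (s : Finset ℕ) (k : ℕ) : ‖((kpSgn s k : ℝ) : ℂ)‖ = 1 := by
  unfold kpSgn; split <;> simp

/-- Coordinatewise cotype-`q` inequality (`q ≥ 2`) for averages over signs. -/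
lemma aux_key {q : ℝ} (hq : 2 ≤ q) (c : ℕ → ℂ) (n : ℕ) :
    2 ^ n * ∑ k ∈ Finset.range n, ‖c k‖ ^ q ≤
      ∑ s ∈ (Finset.range n).powerset,
        ‖∑ k ∈ Finset.range n, (kpSgn s k : ℂ) * c k‖ ^ q := by
  induction n with
  | zero => simpa using Real.rpow_nonneg le_rfl q
  | succ n ih =>
    have hn : n ∉ Finset.range n := by simp
    rw [Finset.range_add_one, Finset.sum_powerset_insert hn]
    have hterm1 : ∀ s ∈ (Finset.range n).powerset,
        (∑ k ∈ insert n (Finset.range n), (kpSgn s k : ℂ) * c k)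
          = (∑ k ∈ Finset.range n, (kpSgn s k : ℂ) * c k) - c n := by
      intro s hs
      rw [Finset.sum_insert hn]
      have hns : n ∉ s := fun h => hn (Finset.mem_powerset.1 hs h)
      rw [kpSgn, if_neg hns]
      push_cast
      ring
    have hterm2 : ∀ s ∈ (Finset.range n).powerset,
        (∑ k ∈ insert n (Finset.range n), (kpSgn (insert n s) k : ℂ) * c k)
          = (∑ k ∈ Finset.range n, (kpSgn s k : ℂ) * c k) + c n := by
      intro s hs
      rw [Finset.sum_insert hn]
      have h1 : kpSgn (insert n s) n = 1 := by rw [kpSgn, if_pos (Finset.mem_insert_self n s)]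
      have h2 : ∀ k ∈ Finset.range n, (kpSgn (insert n s) k : ℂ) * c k
          = (kpSgn s k : ℂ) * c k := by
        intro k hk
        have hkn : k ≠ n := Nat.ne_of_lt (Finset.mem_range.1 hk)
        have : kpSgn (insert n s) k = kpSgn s k := by
          simp [kpSgn, Finset.mem_insert, hkn]
        rw [this]
      rw [h1, Finset.sum_congr rfl h2]
      push_cast
      ring
    set S := fun s => ∑ k ∈ Finset.range n, (kpSgn s k : ℂ) * c k with hS
    have hmain : ∀ s ∈ (Finset.range n).powerset,
        2 * (‖S s‖ ^ q + ‖c n‖ ^ q) ≤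
          ‖∑ k ∈ insert n (Finset.range n), (kpSgn s k : ℂ) * c k‖ ^ q
          + ‖∑ k ∈ insert n (Finset.range n), (kpSgn (insert n s) k : ℂ) * c k‖ ^ q := by
      intro s hs
      rw [hterm1 s hs, hterm2 s hs]
      have := aux_clarkson hq (S s) (c n)
      linarith [this]
    have hsum : ∑ s ∈ (Finset.range n).powerset, (2 * (‖S s‖ ^ q + ‖c n‖ ^ q)) ≤
        ∑ s ∈ (Finset.range n).powerset,
          (‖∑ k ∈ insert n (Finset.range n), (kpSgn s k : ℂ) * c k‖ ^ q
          + ‖∑ k ∈ insert n (Finset.range n), (kpSgn (insert n s) k : ℂ) * c k‖ ^ q) :=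
      Finset.sum_le_sum hmain
    rw [Finset.sum_add_distrib] at hsum
    have hcard : ∑ s ∈ (Finset.range n).powerset, (2 * (‖S s‖ ^ q + ‖c n‖ ^ q))
        = 2 * (∑ s ∈ (Finset.range n).powerset, ‖S s‖ ^ q) + 2 * 2 ^ n * ‖c n‖ ^ q := by
      rw [Finset.sum_congr rfl (fun s _ => by ring : ∀ s ∈ (Finset.range n).powerset,
        2 * (‖S s‖ ^ q + ‖c n‖ ^ q) = 2 * ‖S s‖ ^ q + 2 * ‖c n‖ ^ q)]
      rw [Finset.sum_add_distrib, ← Finset.mul_sum, Finset.sum_const,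
        Finset.card_powerset, Finset.card_range]
      ring
    rw [hcard] at hsum
    rw [Finset.sum_insert hn]
    calc 2 ^ (n+1) * (‖c n‖ ^ q + ∑ k ∈ Finset.range n, ‖c k‖ ^ q)
        = 2 * 2 ^ n * ‖c n‖ ^ q + 2 * (2 ^ n * ∑ k ∈ Finset.range n, ‖c k‖ ^ q) := by ring
      _ ≤ 2 * 2 ^ n * ‖c n‖ ^ q + 2 * (∑ s ∈ (Finset.range n).powerset, ‖S s‖ ^ q) := by
          nlinarith [ih]
      _ ≤ _ := by linarith [hsum]

end Aux

/-- The Kalton–Peck map `Ω_p` on `ℓ_p`: `Ω_p(x)_k = x_k · log (|x_k| / ‖x‖_p)`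
(terms with `x_k = 0` vanish, and `Ω_p 0 = 0`, using `Real.log 0 = 0`). -/
noncomputable def kaltonPeck (p : ℝ≥0∞) (x : lp (fun _ : ℕ => ℂ) p) : ℕ → ℂ :=
  fun k => x k * (Real.log (‖x k‖ / ‖x‖) : ℂ)

set_option maxHeartbeats 1000000 in
/-- **Example 4.1 of the paper, nontriviality for `2 < p < ∞`.**
For `2 < p < ∞`, the Kalton–Peck map `Ω_p` is nontrivial: there is no linear map
`Λ : ℓ_p → ℂ^ℕ` and constant `C ≥ 0` such that `Ω_p x - Λ x ∈ ℓ_p` with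
`‖Ω_p x - Λ x‖_p ≤ C ‖x‖_p` for all `x ∈ ℓ_p`. -/
theorem kaltonPeck_nontrivial (p : ℝ≥0∞) [Fact (1 ≤ p)] (hp2 : 2 < p) (hptop : p ≠ ∞) :
    ¬ ∃ (Λ : lp (fun _ : ℕ => ℂ) p →ₗ[ℂ] (ℕ → ℂ)) (C : ℝ), 0 ≤ C ∧
        ∀ x : lp (fun _ : ℕ => ℂ) p, ∃ y : lp (fun _ : ℕ => ℂ) p,
          (∀ k : ℕ, y k = kaltonPeck p x k - Λ x k) ∧ ‖y‖ ≤ C * ‖x‖ := by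
  rintro ⟨Λ, C, hC, hbound⟩
  have hq2 : 2 < p.toReal := by
    have h := (ENNReal.toReal_lt_toReal (by norm_num) hptop).2 hp2
    simpa using h
  set q := p.toReal with hqdef
  have hq0 : 0 < q := by linarith
  have hq2' : (2:ℝ) ≤ q := le_of_lt hq2
  -- choice of n
  set n : ℕ := ⌈Real.exp (2 * C * q)⌉₊ + 1 with hndef
  have hnpos : (0:ℝ) < (n:ℝ) := by positivity
  have hlog : 2 * C * q < Real.log n := by
    rw [Real.lt_log_iff_exp_lt hnpos]
    have h1 := Nat.le_ceil (Real.exp (2 * C * q))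
    have h2 : ((⌈Real.exp (2 * C * q)⌉₊ : ℝ)) < (n:ℝ) := by
      rw [hndef]; push_cast; linarith
    linarith
  set a : ℝ := Real.log n / q with hadef
  have haC : 2 * C < a := by
    rw [hadef, lt_div_iff₀ hq0]; linarith
  have ha0 : 0 < a := by linarith
  -- basis vectors
  set e : ℕ → lp (fun _ : ℕ => ℂ) p := fun k => lp.single p k (1:ℂ) with hedef
  have he_norm : ∀ k, ‖e k‖ = 1 := fun k => by
    simpa using lp.norm_single (E := fun _ : ℕ => ℂ) (zero_lt_one.trans_le (Fact.out : (1:ℝ≥0∞) ≤ p)) k (1:ℂ)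
  have he_apply : ∀ k j, (e k) j = if j = k then (1:ℂ) else 0 := by
    intro k j
    by_cases h : j = k
    · subst h; simp [hedef, lp.single_apply_self]
    · simp [hedef, lp.single_apply_ne p k _ h, h]
  have hkp_e : ∀ k, kaltonPeck p (e k) = fun _ => 0 := by
    intro k; funext j
    show (e k) j * (Real.log (‖(e k) j‖ / ‖e k‖) : ℂ) = 0
    rcases eq_or_ne j k with h | h
    · subst h
      rw [he_apply j j, if_pos rfl, he_norm j]
      norm_num
    · rw [he_apply k j, if_neg h]
      simp
  -- the vectors `v k` correcting `Λ (e k)`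
  choose v hv hvn using fun k => hbound (e k)
  have hv' : ∀ k j, v k j = -(Λ (e k) j) := by
    intro k j; rw [hv k j, hkp_e k]; simp
  have hvC : ∀ k, ‖v k‖ ≤ C := fun k => by
    have h := hvn k; rwa [he_norm k, mul_one] at h
  -- `w k = v k - a • e k`
  set w : ℕ → lp (fun _ : ℕ => ℂ) p := fun k => v k - (a:ℂ) • e k with hwdef
  have hw_apply : ∀ k j, (w k) j = v k j - (a:ℂ) * (e k) j := by
    intro k j
    show (↑(v k - (a:ℂ) • e k) : ℕ → ℂ) j = _
    rw [lp.coeFn_sub, Pi.sub_apply, lp.coeFn_smul, Pi.smul_apply, smul_eq_mul]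
  have hw_norm : ∀ k, a - C ≤ ‖w k‖ := by
    intro k
    have h1 : ‖(a:ℂ) • e k‖ - ‖v k‖ ≤ ‖(a:ℂ) • e k - v k‖ := norm_sub_norm_le _ _
    have h2 : ‖(a:ℂ) • e k‖ = a := by
      rw [norm_smul, he_norm, mul_one, Complex.norm_real, Real.norm_eq_abs, abs_of_pos ha0]
    have h3 : ‖(a:ℂ) • e k - v k‖ = ‖w k‖ := by
      rw [hwdef, norm_sub_rev]
    have h4 := hvC k
    rw [h2, h3] at h1
    linarith
  -- the sign vectors `x s`
  set σ : Finset ℕ → ℕ → ℂ := fun s k => ((kpSgn s k : ℝ) : ℂ) with hσdef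
  have hσ_norm : ∀ s k, ‖σ s k‖ = 1 := fun s k => kpSgn_norm s k
  set x : Finset ℕ → lp (fun _ : ℕ => ℂ) p :=
    fun s => ∑ k ∈ Finset.range n, lp.single p k (σ s k) with hxdef
  have hx_normq : ∀ s, ‖x s‖ ^ q = n := by
    intro s
    rw [hxdef]
    rw [lp.norm_sum_single (E := fun _ : ℕ => ℂ) hq0 (fun k => σ s k) (Finset.range n)]
    simp only [hσ_norm, Real.one_rpow]
    simp
  have hx_pos : ∀ s, 0 < ‖x s‖ := by
    intro s
    rcases (norm_nonneg (x s)).lt_or_eq with h | h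
    · exact h
    · exfalso
      have := hx_normq s
      rw [← h, Real.zero_rpow hq0.ne'] at this
      linarith
  have hlogx : ∀ s, Real.log ‖x s‖ = a := by
    intro s
    have h1 : q * Real.log ‖x s‖ = Real.log n := by
      rw [← Real.log_rpow (hx_pos s), hx_normq s]
    rw [hadef, ← h1]
    field_simp
  have hx_apply : ∀ s j, (x s) j = if j ∈ Finset.range n then σ s j else 0 := by
    intro s j
    rw [hxdef]
    show (↑(∑ k ∈ Finset.range n, lp.single p k (σ s k)) : ℕ → ℂ) j = _
    rw [lp.coeFn_sum, Finset.sum_apply]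
    simp only [lp.single_apply]
    simp only [Pi.single_apply]
    rw [Finset.sum_ite_eq]
  -- Kalton–Peck on the sign vectors
  have hkp_x : ∀ s j, kaltonPeck p (x s) j
      = if j ∈ Finset.range n then -(a:ℂ) * σ s j else 0 := by
    intro s j
    show (x s) j * (Real.log (‖(x s) j‖ / ‖x s‖) : ℂ) = _
    rw [hx_apply s j]
    by_cases h : j ∈ Finset.range n
    · rw [if_pos h, if_pos h]
      have habs : ‖σ s j‖ = 1 := by
        exact hσ_norm s j
      rw [habs]
      have hlog1 : Real.log (1 / ‖x s‖) = -a := by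
        rw [one_div, Real.log_inv, hlogx]
      rw [hlog1]
      push_cast
      ring
    · rw [if_neg h, if_neg h, zero_mul]
  -- apply the hypothesis to the sign vectors
  choose y hy hyn using fun s => hbound (x s)
  -- `z s = ∑ σ s k • w k`
  set z : Finset ℕ → lp (fun _ : ℕ => ℂ) p :=
    fun s => ∑ k ∈ Finset.range n, σ s k • w k with hzdef
  have hz_apply : ∀ s j, (z s) j = ∑ k ∈ Finset.range n, σ s k * (w k) j := by
    intro s j
    rw [hzdef]
    show (↑(∑ k ∈ Finset.range n, σ s k • w k) : ℕ → ℂ) j = _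
    rw [lp.coeFn_sum, Finset.sum_apply]
    refine Finset.sum_congr rfl fun k _ => ?_
    rw [lp.coeFn_smul, Pi.smul_apply, smul_eq_mul]
  have hΛx : ∀ s j, Λ (x s) j = ∑ k ∈ Finset.range n, σ s k * (Λ (e k) j) := by
    intro s j
    have hx_sum : x s = ∑ k ∈ Finset.range n, σ s k • e k := by
      rw [hxdef]
      refine Finset.sum_congr rfl fun k _ => ?_
      have h1 : e k = lp.single p k (1:ℂ) := by rw [hedef]
      rw [h1, ← lp.single_smul, smul_eq_mul, mul_one]
    rw [hx_sum, map_sum]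
    rw [Finset.sum_apply]
    refine Finset.sum_congr rfl fun k _ => ?_
    rw [map_smul, Pi.smul_apply, smul_eq_mul]
  have he_sum : ∀ s j, ∑ k ∈ Finset.range n, σ s k * (e k) j
      = if j ∈ Finset.range n then σ s j else 0 := by
    intro s j
    rw [Finset.sum_congr rfl (fun k _ => by rw [he_apply k j])]
    simp [mul_ite, Finset.sum_ite_eq]
  -- `z s` equals the corrector `y s`
  have hze : ∀ s, z s = y s := by
    intro s
    apply lp.ext
    funext j
    show (z s) j = (y s) j
    rw [hz_apply s j, hy s j, hkp_x s j, hΛx s j]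
    have hexp : ∑ k ∈ Finset.range n, σ s k * (w k) j
        = (∑ k ∈ Finset.range n, σ s k * v k j)
          - (a:ℂ) * ∑ k ∈ Finset.range n, σ s k * (e k) j := by
      rw [Finset.mul_sum, ← Finset.sum_sub_distrib]
      refine Finset.sum_congr rfl fun k _ => ?_
      rw [hw_apply k j]
      ring
    rw [hexp, he_sum s j]
    have hΛv : ∑ k ∈ Finset.range n, σ s k * (Λ (e k) j)
        = -∑ k ∈ Finset.range n, σ s k * v k j := by
      rw [← Finset.sum_neg_distrib]
      refine Finset.sum_congr rfl fun k _ => ?_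
      rw [hv' k j]
      ring
    rw [hΛv]
    by_cases h : j ∈ Finset.range n
    · rw [if_pos h, if_pos h]; ring
    · rw [if_neg h, if_neg h]; ring
  have hzn : ∀ s, ‖z s‖ ^ q ≤ C ^ q * n := by
    intro s
    have h1 : ‖z s‖ ≤ C * ‖x s‖ := by rw [hze s]; exact hyn s
    have h2 : ‖z s‖ ^ q ≤ (C * ‖x s‖) ^ q :=
      Real.rpow_le_rpow (norm_nonneg _) h1 hq0.le
    rwa [Real.mul_rpow hC (norm_nonneg _), hx_normq s] at h2
  -- summability facts
  have hsumm : ∀ f : lp (fun _ : ℕ => ℂ) p, Summable (fun j => ‖f j‖ ^ q) :=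
    fun f => (lp.hasSum_norm hq0 f).summable
  have htsum : ∀ f : lp (fun _ : ℕ => ℂ) p, ∑' j, ‖f j‖ ^ q = ‖f‖ ^ q :=
    fun f => (lp.hasSum_norm hq0 f).tsum_eq
  -- pointwise cotype inequality
  have hpt : ∀ j, 2 ^ n * ∑ k ∈ Finset.range n, ‖(w k) j‖ ^ q
      ≤ ∑ s ∈ (Finset.range n).powerset, ‖(z s) j‖ ^ q := by
    intro j
    have h := aux_key hq2' (fun k => (w k) j) n
    calc 2 ^ n * ∑ k ∈ Finset.range n, ‖(w k) j‖ ^ q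
        ≤ ∑ s ∈ (Finset.range n).powerset,
            ‖∑ k ∈ Finset.range n, (kpSgn s k : ℂ) * (w k) j‖ ^ q := h
      _ = ∑ s ∈ (Finset.range n).powerset, ‖(z s) j‖ ^ q := by
          refine Finset.sum_congr rfl fun s _ => ?_
          rw [hz_apply s j]
  -- summing up
  have hsumL : Summable (fun j => (2:ℝ) ^ n * ∑ k ∈ Finset.range n, ‖(w k) j‖ ^ q) :=
    (summable_sum fun k _ => hsumm (w k)).mul_left _
  have hsumR : Summable (fun j => ∑ s ∈ (Finset.range n).powerset, ‖(z s) j‖ ^ q) :=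
    summable_sum fun s _ => hsumm (z s)
  have hmain := Summable.tsum_le_tsum hpt hsumL hsumR
  have hLeq : ∑' j, ((2:ℝ) ^ n * ∑ k ∈ Finset.range n, ‖(w k) j‖ ^ q)
      = 2 ^ n * ∑ k ∈ Finset.range n, ‖w k‖ ^ q := by
    rw [tsum_mul_left, Summable.tsum_finsetSum fun k _ => hsumm (w k)]
    congr 1
    exact Finset.sum_congr rfl fun k _ => htsum (w k)
  have hReq : ∑' j, (∑ s ∈ (Finset.range n).powerset, ‖(z s) j‖ ^ q)
      = ∑ s ∈ (Finset.range n).powerset, ‖z s‖ ^ q := by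
    rw [Summable.tsum_finsetSum fun s _ => hsumm (z s)]
    exact Finset.sum_congr rfl fun s _ => htsum (z s)
  rw [hLeq, hReq] at hmain
  have hRbound : ∑ s ∈ (Finset.range n).powerset, ‖z s‖ ^ q ≤ 2 ^ n * (C ^ q * n) := by
    calc ∑ s ∈ (Finset.range n).powerset, ‖z s‖ ^ q
        ≤ ∑ s ∈ (Finset.range n).powerset, C ^ q * n := Finset.sum_le_sum fun s _ => hzn s
      _ = 2 ^ n * (C ^ q * n) := by
          rw [Finset.sum_const, Finset.card_powerset, Finset.card_range]
          push_cast
          ring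
  have hcancel : ∑ k ∈ Finset.range n, ‖w k‖ ^ q ≤ C ^ q * n := by
    have h2n : (0:ℝ) < 2 ^ n := by positivity
    nlinarith [hmain, hRbound]
  have hLbound : (n:ℝ) * (a - C) ^ q ≤ ∑ k ∈ Finset.range n, ‖w k‖ ^ q := by
    have : ∀ k ∈ Finset.range n, (a - C) ^ q ≤ ‖w k‖ ^ q := fun k _ =>
      Real.rpow_le_rpow (by linarith) (hw_norm k) hq0.le
    calc (n:ℝ) * (a - C) ^ q = ∑ _k ∈ Finset.range n, (a - C) ^ q := by
          rw [Finset.sum_const, Finset.card_range, nsmul_eq_mul]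
      _ ≤ _ := Finset.sum_le_sum this
  have hfinal : (a - C) ^ q ≤ C ^ q := by
    nlinarith [hLbound, hcancel]
  have hstrict : C ^ q < (a - C) ^ q :=
    Real.rpow_lt_rpow hC (by linarith) hq0
  linarith
end
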